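/- Let f : Finset α → ℝ. Let D be a finite subset of α, let y₁ ≠ y₂ be two elements not in D, and let F₁ and F₂ be finite subsets of α disjoint from D and not containing y₁ or y₂. Suppose that f(H ∪ {y₁}) = f(H ∪ F₁) and f(H ∪ {y₂}) = f(H ∪ F₂) for every H ⊆ D. Then C_f(D ∪ {y₁}) − C_f(D ∪ {y₂}) = Σ_{D ⊆ H ⊆ D ∪ F₁} C_f(H) − Σ_{D ⊆ H ⊆ D ∪ F₂} C_f(H), where C_f(S) = Σ_{K ⊆ S} (−1)^{|S| − |K|} f(K). -/

import Mathlib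

/-- The alternating-sum transform `C_f(S) = Σ_{K ⊆ S} (−1)^(|S| − |K|) f(K)`. -/
noncomputable def Cf {α : Type*} (f : Finset α → ℝ) (S : Finset α) : ℝ :=
  ∑ K ∈ S.powerset, (-1 : ℝ) ^ (S.card - K.card) * f K

lemma Cf_insert {α : Type*} [DecidableEq α] (f : Finset α → ℝ) (S : Finset α) (a : α)
    (ha : a ∉ S) :
    Cf f (insert a S) = Cf (fun K => f (insert a K)) S - Cf f S := by
  simp only [Cf]
  rw [Finset.powerset_insert, Finset.sum_union, Finset.sum_image]
  · have hc : (insert a S).card = S.card + 1 := Finset.card_insert_of_notMem ha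
    have h1 : ∀ K ∈ S.powerset, (-1 : ℝ) ^ ((insert a S).card - K.card) * f K
        = -((-1 : ℝ) ^ (S.card - K.card) * f K) := by
      intro K hK
      rw [Finset.mem_powerset] at hK
      have hle := Finset.card_le_card hK
      have : (insert a S).card - K.card = (S.card - K.card) + 1 := by
        rw [hc]; omega
      rw [this, pow_succ]; ring
    have h2 : ∀ K ∈ S.powerset, (-1 : ℝ) ^ ((insert a S).card - (insert a K).card)
        * f (insert a K) = (-1 : ℝ) ^ (S.card - K.card) * f (insert a K) := by
      intro K hK
      rw [Finset.mem_powerset] at hK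
      have haK : a ∉ K := fun h => ha (hK h)
      rw [hc, Finset.card_insert_of_notMem haK, Nat.succ_sub_succ]
    rw [Finset.sum_congr rfl h1, Finset.sum_congr rfl h2]
    rw [Finset.sum_neg_distrib]
    ring
  · intro x hx y hy h
    rw [Finset.mem_coe, Finset.mem_powerset] at hx hy
    have hax : a ∉ x := fun h => ha (hx h)
    have hay : a ∉ y := fun h => ha (hy h)
    rw [← Finset.erase_insert hax, ← Finset.erase_insert hay, h]
  · rw [Finset.disjoint_left]
    intro t ht ht'
    rw [Finset.mem_powerset] at ht
    rcases Finset.mem_image.1 ht' with ⟨u, _, rfl⟩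
    exact ha (ht (Finset.mem_insert_self a u))

lemma sumCf {α : Type*} [DecidableEq α] (f : Finset α → ℝ) (D F : Finset α)
    (h : Disjoint D F) :
    ∑ G ∈ F.powerset, Cf f (D ∪ G)
      = ∑ K ∈ D.powerset, (-1 : ℝ) ^ (D.card - K.card) * f (K ∪ F) := by
  induction F using Finset.induction generalizing f with
  | empty => simp [Cf]
  | @insert a F haF ih =>
    have haD : a ∉ D := Finset.disjoint_right.1 h (Finset.mem_insert_self a F)
    have hDF : Disjoint D F := h.mono_right (Finset.subset_insert a F)
    rw [Finset.powerset_insert, Finset.sum_union, Finset.sum_image]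
    · have : ∀ G ∈ F.powerset, Cf f (D ∪ insert a G)
          = Cf (fun K => f (insert a K)) (D ∪ G) - Cf f (D ∪ G) := by
        intro G hG
        rw [Finset.mem_powerset] at hG
        have : D ∪ insert a G = insert a (D ∪ G) := by
          ext x; simp [or_left_comm, or_comm]
        rw [this, Cf_insert]
        simp only [Finset.mem_union, not_or]
        exact ⟨haD, fun hx => haF (hG hx)⟩
      rw [Finset.sum_congr rfl this, Finset.sum_sub_distrib]
      rw [ih f hDF, ih (fun K => f (insert a K)) hDF]
      have : ∀ K ∈ D.powerset, (-1 : ℝ) ^ (D.card - K.card) * f (insert a (K ∪ F))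
          = (-1 : ℝ) ^ (D.card - K.card) * f (K ∪ insert a F) := by
        intro K _
        congr 2
        ext x; simp [or_left_comm, or_comm]
      rw [Finset.sum_congr rfl this]
      ring
    · intro x hx y hy hxy
      rw [Finset.mem_coe, Finset.mem_powerset] at hx hy
      have hax : a ∉ x := fun h' => haF (hx h')
      have hay : a ∉ y := fun h' => haF (hy h')
      rw [← Finset.erase_insert hax, ← Finset.erase_insert hay, hxy]
    · rw [Finset.disjoint_left]
      intro t ht ht'
      rw [Finset.mem_powerset] at ht
      rcases Finset.mem_image.1 ht' with ⟨u, _, rfl⟩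
      exact haF (ht (Finset.mem_insert_self a u))

lemma filter_eq_image {α : Type*} [DecidableEq α] (D F : Finset α) (h : Disjoint D F) :
    (D ∪ F).powerset.filter (fun H => D ⊆ H) = F.powerset.image (fun G => D ∪ G) := by
  ext H
  simp only [Finset.mem_filter, Finset.mem_powerset, Finset.mem_image]
  constructor
  · rintro ⟨hHsub, hDH⟩
    refine ⟨H \ D, fun x hx => ?_, ?_⟩
    · rcases Finset.mem_sdiff.1 hx with ⟨hxH, hxD⟩
      rcases Finset.mem_union.1 (hHsub hxH) with h' | h'
      · exact absurd h' hxD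
      · exact h'
    · ext x
      simp only [Finset.mem_union, Finset.mem_sdiff]
      constructor
      · rintro (h' | ⟨h', _⟩)
        · exact hDH h'
        · exact h'
      · intro hx
        by_cases hxD : x ∈ D
        · exact Or.inl hxD
        · exact Or.inr ⟨hx, hxD⟩
  · rintro ⟨G, hG, rfl⟩
    exact ⟨Finset.union_subset_union_right hG, Finset.subset_union_left⟩

lemma key {α : Type*} [DecidableEq α] (f : Finset α → ℝ) (D : Finset α) (y : α)
    (hy : y ∉ D) (F : Finset α) (hF : Disjoint D F)
    (hf : ∀ H ⊆ D, f (insert y H) = f (H ∪ F)) :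
    Cf f (insert y D)
      = (∑ H ∈ (D ∪ F).powerset.filter (fun H => D ⊆ H), Cf f H) - Cf f D := by
  rw [filter_eq_image D F hF, Finset.sum_image, sumCf f D F hF, Cf_insert f D y hy]
  · congr 1
    refine Finset.sum_congr rfl fun K hK => ?_
    rw [Finset.mem_powerset] at hK
    show (-1 : ℝ) ^ (D.card - K.card) * f (insert y K) = _
    rw [hf K hK]
  · intro x hx y' hy' hxy
    rw [Finset.mem_coe, Finset.mem_powerset] at hx hy'
    have : ∀ G : Finset α, G ⊆ F → (D ∪ G) \ D = G := by
      intro G hG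
      rw [Finset.union_sdiff_cancel_left]
      exact hF.mono_right hG
    beta_reduce at hxy
    rw [← this x hx, ← this y' hy', hxy]

/-- Core identity of the four-term relation: if `f(H ∪ {yᵢ}) = f(H ∪ Fᵢ)` for
all `H ⊆ D`, then
`C_f(D ∪ {y₁}) − C_f(D ∪ {y₂}) = Σ_{D ⊆ H ⊆ D ∪ F₁} C_f(H) − Σ_{D ⊆ H ⊆ D ∪ F₂} C_f(H)`. -/
theorem Cf_four_term_core {α : Type*} [DecidableEq α] (f : Finset α → ℝ)
    (D : Finset α) (y₁ y₂ : α) (hy : y₁ ≠ y₂) (hy₁ : y₁ ∉ D) (hy₂ : y₂ ∉ D)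
    (F₁ F₂ : Finset α) (hF₁ : Disjoint D F₁) (hF₂ : Disjoint D F₂)
    (hy₁F₁ : y₁ ∉ F₁) (hy₂F₁ : y₂ ∉ F₁) (hy₁F₂ : y₁ ∉ F₂) (hy₂F₂ : y₂ ∉ F₂)
    (hf₁ : ∀ H ⊆ D, f (insert y₁ H) = f (H ∪ F₁))
    (hf₂ : ∀ H ⊆ D, f (insert y₂ H) = f (H ∪ F₂)) :
    Cf f (insert y₁ D) - Cf f (insert y₂ D)
      = (∑ H ∈ (D ∪ F₁).powerset.filter (fun H => D ⊆ H), Cf f H)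
        - ∑ H ∈ (D ∪ F₂).powerset.filter (fun H => D ⊆ H), Cf f H := by
  rw [key f D y₁ hy₁ F₁ hF₁ hf₁, key f D y₂ hy₂ F₂ hF₂ hf₂]
  ring
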